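/- Let α ≥ 2 and ℓ ≥ α be integers, and define the blow-up B(z,w) = (z·w^{α}, w²) as a polynomial map ℂ² → ℂ². Let F, G ∈ ℂ[[z,w]] be formal power series such that F(z,w) − z and G(z,w) − w both have order at least ℓ+1, and G(z,w) = w·(1 + Ψ(z,w)) for some Ψ of order ≥ ℓ. Then there exist unique formal power series F̂, Ĝ ∈ ℂ[[z,w]] such that F̂(z,w) − z and Ĝ(z,w) − w have order at least ℓ+1 and the identities Ĝ(z,w)² = G(B(z,w)) and F̂(z,w)·Ĝ(z,w)^{α} = F(B(z,w)) hold in ℂ[[z,w]]. -/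

import Mathlib

/-- Composition of multivariate formal power series: `f` in variables `σ` with
the substitution `g : σ → MvPowerSeries τ R`.  This gives the usual substitution
whenever each `g i` has zero constant term. -/
noncomputable def pscomp {σ τ : Type*} [Fintype σ] {R : Type*} [CommRing R]
    (f : MvPowerSeries σ R) (g : σ → MvPowerSeries τ R) : MvPowerSeries τ R :=
  letI := Classical.decEq σ
  fun d => MvPowerSeries.coeff (R := R) d
    (MvPolynomial.aeval g
      (MvPowerSeries.trunc R
        (Finsupp.equivFunOnFinite.symm fun _ => (d.sum fun _ n => n) + 1) f))

/-- `f` has order at least `r`: all monomials of total degree `< r` have zero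
coefficient. -/
def ordGE {σ : Type*} (f : MvPowerSeries σ ℂ) (r : ℕ) : Prop :=
  ∀ d : σ →₀ ℕ, (d.sum fun _ n => n) < r → MvPowerSeries.coeff (R := ℂ) d f = 0


namespace Stmt13Aux
open MvPowerSeries

abbrev S2 := MvPowerSeries (Fin 2) ℂ

def tdeg (d : Fin 2 →₀ ℕ) : ℕ := d.sum fun _ n => n

lemma tdeg_eq (d : Fin 2 →₀ ℕ) : tdeg d = d 0 + d 1 := by
  rw [tdeg, Finsupp.sum_fintype _ _ (fun _ => rfl), Fin.sum_univ_two]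

lemma tdeg_add (a b : Fin 2 →₀ ℕ) : tdeg (a + b) = tdeg a + tdeg b := by
  simp only [tdeg_eq, Finsupp.add_apply]; ring

lemma ordGE_iff {f : S2} {r : ℕ} :
    ordGE f r ↔ ∀ d, tdeg d < r → coeff (R := ℂ) d f = 0 := Iff.rfl

lemma ordGE_mono {f : S2} {r r' : ℕ} (h : r' ≤ r) (hf : ordGE f r) : ordGE f r' :=
  fun d hd => hf d (lt_of_lt_of_le hd h)

lemma ordGE_zero (r : ℕ) : ordGE (0 : S2) r := fun d _ => by simp

lemma ordGE_triv (f : S2) : ordGE f 0 := fun _ hd => absurd hd (Nat.not_lt_zero _)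

lemma ordGE_add {f g : S2} {r : ℕ} (hf : ordGE f r) (hg : ordGE g r) : ordGE (f + g) r :=
  fun d hd => by rw [map_add, hf d hd, hg d hd, add_zero]

lemma ordGE_neg {f : S2} {r : ℕ} (hf : ordGE f r) : ordGE (-f) r :=
  fun d hd => by rw [map_neg, hf d hd, neg_zero]

lemma ordGE_sub {f g : S2} {r : ℕ} (hf : ordGE f r) (hg : ordGE g r) : ordGE (f - g) r := by
  rw [sub_eq_add_neg]; exact ordGE_add hf (ordGE_neg hg)

lemma ordGE_smul {f : S2} {r : ℕ} (c : ℂ) (hf : ordGE f r) : ordGE (c • f) r :=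
  fun d hd => by rw [MvPowerSeries.coeff_smul, hf d hd, mul_zero]

lemma ordGE_mul {f g : S2} {a b : ℕ} (hf : ordGE f a) (hg : ordGE g b) :
    ordGE (f * g) (a + b) := by
  intro d hd
  rw [ordGE_iff] at hf hg
  rw [MvPowerSeries.coeff_mul]
  apply Finset.sum_eq_zero
  intro p hp
  have hsum : tdeg p.1 + tdeg p.2 = tdeg d := by
    rw [← tdeg_add, Finset.HasAntidiagonal.mem_antidiagonal.mp hp]
  have hd' : tdeg d < a + b := hd
  by_cases h1 : tdeg p.1 < a
  · rw [hf p.1 h1, zero_mul]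
  · rw [hg p.2 (by omega), mul_zero]

lemma ordGE_pow {f : S2} {a : ℕ} (hf : ordGE f a) (n : ℕ) : ordGE (f ^ n) (n * a) := by
  induction n with
  | zero => simpa using ordGE_triv (1 : S2)
  | succ n ih =>
    rw [pow_succ]
    have := ordGE_mul ih hf
    rwa [show n * a + a = (n + 1) * a by ring] at this

lemma eq_zero_finsupp {d : Fin 2 →₀ ℕ} (h : tdeg d < 1) : d = 0 := by
  rw [tdeg_eq] at h
  ext j
  fin_cases j <;> simp <;> omega

lemma ordGE_X (i : Fin 2) : ordGE (X i : S2) 1 := by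
  intro d hd
  rw [eq_zero_finsupp hd, MvPowerSeries.coeff_X, if_neg]
  intro h
  have := DFunLike.congr_fun h i
  simp at this

lemma prod_ord {g : Fin 2 → S2} {k : ℕ} (hg : ∀ i, ordGE (g i) k) (e : Fin 2 →₀ ℕ) :
    ordGE (e.prod fun i n => g i ^ n) (k * tdeg e) := by
  rw [Finsupp.prod_fintype _ _ (fun i => pow_zero _), Fin.prod_univ_two]
  have := ordGE_mul (ordGE_pow (hg 0) (e 0)) (ordGE_pow (hg 1) (e 1))
  rwa [show e 0 * k + e 1 * k = k * tdeg e by rw [tdeg_eq]; ring] at this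

lemma aeval_ord {g : Fin 2 → S2} {k r : ℕ} (hg : ∀ i, ordGE (g i) k)
    (P : MvPolynomial (Fin 2) ℂ) (hP : ∀ e, P.coeff e ≠ 0 → r ≤ tdeg e)
    (d : Fin 2 →₀ ℕ) (hd : tdeg d < k * r) :
    coeff (R := ℂ) d (MvPolynomial.aeval g P : S2) = 0 := by
  conv_lhs => rw [P.as_sum]
  rw [map_sum, map_sum]
  apply Finset.sum_eq_zero
  intro e he
  rw [MvPolynomial.aeval_monomial]
  have h1 : r ≤ tdeg e := hP e (MvPolynomial.mem_support_iff.mp he)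
  have h2 := ordGE_mul (ordGE_triv (algebraMap ℂ S2 (P.coeff e))) (prod_ord hg e)
  apply h2
  have : k * r ≤ k * tdeg e := Nat.mul_le_mul_left _ h1
  show tdeg d < 0 + k * tdeg e
  omega

lemma aeval_congr {g : Fin 2 → S2} (hg : ∀ i, ordGE (g i) 1)
    {P Q : MvPolynomial (Fin 2) ℂ} {D : ℕ}
    (hPQ : ∀ e, tdeg e ≤ D → P.coeff e = Q.coeff e)
    {d : Fin 2 →₀ ℕ} (hd : tdeg d ≤ D) :
    coeff (R := ℂ) d (MvPolynomial.aeval g P : S2) = coeff (R := ℂ) d (MvPolynomial.aeval g Q : S2) := by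
  rw [← sub_eq_zero, ← map_sub, ← map_sub]
  apply aeval_ord hg _ (r := D + 1)
  · intro e he
    by_contra h
    push_neg at h
    apply he
    rw [MvPolynomial.coeff_sub, hPQ e (by omega), sub_self]
  · omega

/-- the constant finsupp -/
noncomputable def cst (c : ℕ) : Fin 2 →₀ ℕ := Finsupp.equivFunOnFinite.symm fun _ => c

lemma cst_apply (c : ℕ) (i : Fin 2) : cst c i = c := rfl

lemma apply_le_tdeg (e : Fin 2 →₀ ℕ) (i : Fin 2) : e i ≤ tdeg e := by
  rw [tdeg_eq]
  fin_cases i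
  · exact Nat.le_add_right _ _
  · exact Nat.le_add_left _ _

lemma lt_cst {e : Fin 2 →₀ ℕ} {c : ℕ} (h : tdeg e < c) : e < cst c := by
  apply lt_of_le_of_ne
  · intro i
    rw [cst_apply]
    exact le_trans (apply_le_tdeg e i) (le_of_lt h)
  · intro hc
    have := DFunLike.congr_fun hc 0
    rw [cst_apply] at this
    have h0 := apply_le_tdeg e 0
    omega

lemma coeff_trunc_cst (f : S2) {e : Fin 2 →₀ ℕ} {c : ℕ} (h : tdeg e < c) :
    (trunc ℂ (cst c) f).coeff e = coeff (R := ℂ) e f := by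
  rw [MvPowerSeries.coeff_trunc, if_pos (lt_cst h)]

lemma coeff_pscomp (f : S2) (g : Fin 2 → S2) (d : Fin 2 →₀ ℕ) :
    coeff (R := ℂ) d (pscomp f g) =
      coeff (R := ℂ) d (MvPolynomial.aeval g (trunc ℂ (cst (tdeg d + 1)) f) : S2) := by
  rw [MvPowerSeries.coeff_apply]
  simp only [pscomp, cst, tdeg]
  congr!

lemma coeff_pscomp_trunc {g : Fin 2 → S2} (hg : ∀ i, ordGE (g i) 1) (f : S2)
    {d : Fin 2 →₀ ℕ} {c : ℕ} (hc : tdeg d < c) :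
    coeff (R := ℂ) d (pscomp f g) =
      coeff (R := ℂ) d (MvPolynomial.aeval g (trunc ℂ (cst c) f) : S2) := by
  rw [coeff_pscomp]
  exact aeval_congr hg (D := tdeg d)
    (fun e he => by rw [coeff_trunc_cst f (by omega), coeff_trunc_cst f (lt_of_le_of_lt he hc)])
    le_rfl

lemma pscomp_add (f1 f2 : S2) (g : Fin 2 → S2) :
    pscomp (f1 + f2) g = pscomp f1 g + pscomp f2 g := by
  apply MvPowerSeries.ext; intro d
  rw [map_add, coeff_pscomp, coeff_pscomp, coeff_pscomp, map_add, map_add, map_add]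

lemma pscomp_mul {g : Fin 2 → S2} (hg : ∀ i, ordGE (g i) 1) (f1 f2 : S2) :
    pscomp (f1 * f2) g = pscomp f1 g * pscomp f2 g := by
  apply MvPowerSeries.ext; intro d
  have h1 : coeff (R := ℂ) d (pscomp (f1 * f2) g) =
      coeff (R := ℂ) d (MvPolynomial.aeval g
        (trunc ℂ (cst (tdeg d + 1)) f1 * trunc ℂ (cst (tdeg d + 1)) f2) : S2) := by
    rw [coeff_pscomp]
    apply aeval_congr hg (D := tdeg d) _ le_rfl
    intro e he
    rw [coeff_trunc_cst _ (by omega), MvPowerSeries.coeff_mul, MvPolynomial.coeff_mul]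
    apply Finset.sum_congr rfl
    intro p hp
    have hadd := Finset.HasAntidiagonal.mem_antidiagonal.mp hp
    have h1 : tdeg p.1 + tdeg p.2 = tdeg e := by rw [← tdeg_add, hadd]
    rw [coeff_trunc_cst _ (by omega), coeff_trunc_cst _ (by omega)]
  rw [h1, map_mul, MvPowerSeries.coeff_mul, MvPowerSeries.coeff_mul]
  apply Finset.sum_congr rfl
  intro p hp
  have hadd := Finset.HasAntidiagonal.mem_antidiagonal.mp hp
  have h1 : tdeg p.1 + tdeg p.2 = tdeg d := by rw [← tdeg_add, hadd]
  rw [coeff_pscomp_trunc hg f1 (c := tdeg d + 1) (by omega),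
    coeff_pscomp_trunc hg f2 (c := tdeg d + 1) (by omega)]

lemma pscomp_one (g : Fin 2 → S2) : pscomp (1 : S2) g = 1 := by
  apply MvPowerSeries.ext; intro d
  rw [coeff_pscomp, MvPowerSeries.trunc_one _ (fun h => by
    have := DFunLike.congr_fun h 0
    rw [cst_apply] at this
    simp at this), map_one]

lemma single_lt_cst (i : Fin 2) {c : ℕ} (hc : 1 ≤ c) : Finsupp.single i 1 < cst c := by
  apply lt_of_le_of_ne
  · intro j
    rw [cst_apply]
    classical
    rw [Finsupp.single_apply]
    split_ifs <;> omega
  · intro h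
    obtain ⟨j, hj⟩ : ∃ j : Fin 2, j ≠ i := by
      fin_cases i
      · exact ⟨1, by decide⟩
      · exact ⟨0, by decide⟩
    have := DFunLike.congr_fun h j
    rw [cst_apply] at this
    classical
    rw [Finsupp.single_apply, if_neg (fun hh => hj hh.symm)] at this
    omega

lemma trunc_X (i : Fin 2) {c : ℕ} (hc : 1 ≤ c) :
    trunc ℂ (cst c) (X i : S2) = MvPolynomial.X i := by
  apply MvPolynomial.ext; intro e
  rw [MvPowerSeries.coeff_trunc, MvPowerSeries.coeff_X, MvPolynomial.coeff_X']
  by_cases he : e = Finsupp.single i 1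
  · subst he
    rw [if_pos (single_lt_cst i hc)]
  · rw [if_neg he]
    rw [if_neg (show ¬(Finsupp.single i 1 = e) from fun h => he h.symm), ite_self]

lemma pscomp_X (g : Fin 2 → S2) (i : Fin 2) : pscomp (X i : S2) g = g i := by
  apply MvPowerSeries.ext; intro d
  rw [coeff_pscomp, trunc_X i (by omega), MvPolynomial.aeval_X]

lemma pscomp_ordGE {g : Fin 2 → S2} (hg : ∀ i, ordGE (g i) 2) {f : S2} {r : ℕ}
    (hf : ordGE f r) : ordGE (pscomp f g) (2 * r) := by
  intro d hd
  rw [coeff_pscomp]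
  apply aeval_ord hg _ _ d hd
  intro e he
  by_contra h
  push_neg at h
  apply he
  rw [MvPowerSeries.coeff_trunc]
  split_ifs with hc
  · exact hf e h
  · rfl

/-- order in the second variable `w` -/
def wOrdGE (f : S2) (r : ℕ) : Prop :=
  ∀ d : Fin 2 →₀ ℕ, d 1 < r → coeff (R := ℂ) d f = 0

lemma wOrdGE_triv (f : S2) : wOrdGE f 0 := fun _ hd => absurd hd (Nat.not_lt_zero _)

lemma wOrdGE_mul {f g : S2} {a b : ℕ} (hf : wOrdGE f a) (hg : wOrdGE g b) :
    wOrdGE (f * g) (a + b) := by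
  intro d hd
  rw [MvPowerSeries.coeff_mul]
  apply Finset.sum_eq_zero
  intro p hp
  have hadd := Finset.HasAntidiagonal.mem_antidiagonal.mp hp
  have h1 : p.1 1 + p.2 1 = d 1 := by rw [← Finsupp.add_apply, hadd]
  by_cases hc : p.1 1 < a
  · rw [hf p.1 hc, zero_mul]
  · rw [hg p.2 (by omega), mul_zero]

lemma wOrdGE_pow {f : S2} {a : ℕ} (hf : wOrdGE f a) (n : ℕ) : wOrdGE (f ^ n) (n * a) := by
  induction n with
  | zero => simpa using wOrdGE_triv (1 : S2)
  | succ n ih =>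
    rw [pow_succ]
    have := wOrdGE_mul ih hf
    rwa [show n * a + a = (n + 1) * a by ring] at this

lemma wOrdGE_X1 : wOrdGE (X 1 : S2) 1 := by
  intro d hd
  rw [MvPowerSeries.coeff_X, if_neg]
  intro h
  have := DFunLike.congr_fun h 1
  classical
  rw [Finsupp.single_apply, if_pos rfl] at this
  omega

lemma aeval_wOrd {g : Fin 2 → S2} {s0 s1 m : ℕ}
    (h0 : wOrdGE (g 0) s0) (h1 : wOrdGE (g 1) s1)
    (P : MvPolynomial (Fin 2) ℂ)
    (hP : ∀ e, P.coeff e ≠ 0 → m ≤ s0 * e 0 + s1 * e 1)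
    (d : Fin 2 →₀ ℕ) (hd : d 1 < m) :
    coeff (R := ℂ) d (MvPolynomial.aeval g P : S2) = 0 := by
  conv_lhs => rw [P.as_sum]
  rw [map_sum, map_sum]
  apply Finset.sum_eq_zero
  intro e he
  rw [MvPolynomial.aeval_monomial]
  have hm : m ≤ s0 * e 0 + s1 * e 1 := hP e (MvPolynomial.mem_support_iff.mp he)
  have h2 : wOrdGE (e.prod fun i n => g i ^ n) (e 0 * s0 + e 1 * s1) := by
    rw [Finsupp.prod_fintype _ _ (fun i => pow_zero _), Fin.prod_univ_two]
    exact wOrdGE_mul (wOrdGE_pow h0 (e 0)) (wOrdGE_pow h1 (e 1))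
  have h3 := wOrdGE_mul (wOrdGE_triv (algebraMap ℂ S2 (P.coeff e))) h2
  apply h3
  have : e 0 * s0 + e 1 * s1 = s0 * e 0 + s1 * e 1 := by ring
  omega

lemma tdeg_single1 (r : ℕ) : tdeg (Finsupp.single (1 : Fin 2) r) = r := by
  rw [tdeg_eq]
  classical
  rw [Finsupp.single_apply, Finsupp.single_apply]
  norm_num

lemma X1pow_div {E : S2} {r : ℕ} (hE : wOrdGE E r) :
    ∃ E' : S2, E = (X (1 : Fin 2) : S2) ^ r * E' ∧
      ∀ s, ordGE E (s + r) → ordGE E' s := by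
  refine ⟨(show S2 from fun d => coeff (R := ℂ) (d + Finsupp.single 1 r) E), ?_, ?_⟩
  · apply MvPowerSeries.ext; intro d
    rw [X_pow_eq, coeff_monomial_mul]
    by_cases h : Finsupp.single (1 : Fin 2) r ≤ d
    · rw [if_pos h, one_mul, MvPowerSeries.coeff_apply]
      show coeff (R := ℂ) d E = coeff (R := ℂ) (d - Finsupp.single 1 r + Finsupp.single 1 r) E
      rw [tsub_add_cancel_of_le h]
    · rw [if_neg h]
      apply hE
      rw [Finsupp.single_le_iff] at h
      omega
  · intro s hs d hd
    rw [MvPowerSeries.coeff_apply]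
    show coeff (R := ℂ) (d + Finsupp.single 1 r) E = 0
    apply hs
    show tdeg (d + Finsupp.single 1 r) < s + r
    rw [tdeg_add, tdeg_single1]
    have : tdeg d < s := hd
    omega

noncomputable def Vseq (Φ : S2) : ℕ → S2
  | 0 => 0
  | n + 1 => (2⁻¹ : ℂ) • (Φ - Vseq Φ n ^ 2)

section Sqrt

variable {Φ : S2} {m : ℕ}

lemma Vseq_ord (hm : 1 ≤ m) (hΦ : ordGE Φ m) (n : ℕ) : ordGE (Vseq Φ n) m := by
  induction n with
  | zero => exact ordGE_zero m
  | succ n ih =>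
    apply ordGE_smul
    apply ordGE_sub hΦ
    apply ordGE_mono (show m ≤ 2 * m by omega)
    exact ordGE_pow ih 2

lemma Vseq_diff_ord (hm : 1 ≤ m) (hΦ : ordGE Φ m) (n : ℕ) :
    ordGE (Vseq Φ (n + 1) - Vseq Φ n) (n + m) := by
  induction n with
  | zero =>
    show ordGE (Vseq Φ 1 - Vseq Φ 0) (0 + m)
    have : Vseq Φ 1 - Vseq Φ 0 = (2⁻¹ : ℂ) • Φ := by
      show (2⁻¹ : ℂ) • (Φ - (0 : S2) ^ 2) - 0 = (2⁻¹ : ℂ) • Φ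
      simp
    rw [this, zero_add]
    exact ordGE_smul _ hΦ
  | succ n ih =>
    have key : Vseq Φ (n + 2) - Vseq Φ (n + 1) =
        (2⁻¹ : ℂ) • ((Vseq Φ n - Vseq Φ (n + 1)) * (Vseq Φ n + Vseq Φ (n + 1))) := by
      show (2⁻¹ : ℂ) • (Φ - Vseq Φ (n + 1) ^ 2) - (2⁻¹ : ℂ) • (Φ - Vseq Φ n ^ 2) = _
      rw [← smul_sub]
      congr 1
      ring
    rw [key]
    apply ordGE_smul
    have h1 : ordGE (Vseq Φ n - Vseq Φ (n + 1)) (n + m) := by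
      have := ordGE_neg ih
      rwa [neg_sub] at this
    have h2 : ordGE (Vseq Φ n + Vseq Φ (n + 1)) m :=
      ordGE_add (Vseq_ord hm hΦ n) (Vseq_ord hm hΦ (n + 1))
    apply ordGE_mono (show n + 1 + m ≤ (n + m) + m by omega)
    exact ordGE_mul h1 h2

lemma Vseq_stab (hm : 1 ≤ m) (hΦ : ordGE Φ m) (p n : ℕ) {d : Fin 2 →₀ ℕ}
    (hd : tdeg d < n + m) :
    coeff (R := ℂ) d (Vseq Φ (n + p)) = coeff (R := ℂ) d (Vseq Φ n) := by
  induction p with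
  | zero => rfl
  | succ p ih =>
    have h1 : coeff (R := ℂ) d (Vseq Φ (n + p + 1) - Vseq Φ (n + p)) = 0 :=
      Vseq_diff_ord hm hΦ (n + p) d (show tdeg d < n + p + m by omega)
    rw [map_sub, sub_eq_zero] at h1
    rw [show n + (p + 1) = n + p + 1 by omega, h1, ih]

noncomputable def vlim (Φ : S2) : S2 := fun d => coeff (R := ℂ) d (Vseq Φ (tdeg d + 1))

lemma coeff_vlim_def (Φ : S2) (d : Fin 2 →₀ ℕ) :
    coeff (R := ℂ) d (vlim Φ) = coeff (R := ℂ) d (Vseq Φ (tdeg d + 1)) := by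
  rw [MvPowerSeries.coeff_apply]
  simp only [vlim]

lemma coeff_vlim (hm : 1 ≤ m) (hΦ : ordGE Φ m) {d : Fin 2 →₀ ℕ} {n : ℕ}
    (hd : tdeg d < n + m) :
    coeff (R := ℂ) d (vlim Φ) = coeff (R := ℂ) d (Vseq Φ n) := by
  have h0 := coeff_vlim_def Φ d
  set M := max n (tdeg d + 1) with hM
  have e1 : coeff (R := ℂ) d (Vseq Φ M) = coeff (R := ℂ) d (Vseq Φ n) := by
    have := Vseq_stab hm hΦ (M - n) n hd
    rwa [Nat.add_sub_cancel' (le_max_left _ _)] at this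
  have e2 : coeff (R := ℂ) d (Vseq Φ M) = coeff (R := ℂ) d (Vseq Φ (tdeg d + 1)) := by
    have := Vseq_stab hm hΦ (M - (tdeg d + 1)) (tdeg d + 1)
      (show tdeg d < tdeg d + 1 + m by omega)
    rwa [Nat.add_sub_cancel' (le_max_right _ _)] at this
  rw [h0, ← e2, e1]

lemma vlim_ord (hm : 1 ≤ m) (hΦ : ordGE Φ m) : ordGE (vlim Φ) m := by
  intro d hd
  rw [coeff_vlim_def]
  exact Vseq_ord hm hΦ _ d hd

lemma vlim_sq (hm : 1 ≤ m) (hΦ : ordGE Φ m) : (1 + vlim Φ) ^ 2 = 1 + Φ := by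
  have key : vlim Φ * vlim Φ + (vlim Φ + vlim Φ) = Φ := by
    apply MvPowerSeries.ext; intro d
    set n := tdeg d with hn
    set VN := Vseq Φ (n + 1) with hVN
    set V' := Vseq Φ n with hV'
    have hlt : tdeg d < (n + 1) + m := by omega
    have hvv : coeff (R := ℂ) d (vlim Φ * vlim Φ) = coeff (R := ℂ) d (VN * VN) := by
      rw [MvPowerSeries.coeff_mul, MvPowerSeries.coeff_mul]
      apply Finset.sum_congr rfl
      intro p hp
      have hadd := Finset.HasAntidiagonal.mem_antidiagonal.mp hp
      have h1 : tdeg p.1 + tdeg p.2 = tdeg d := by rw [← tdeg_add, hadd]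
      rw [coeff_vlim hm hΦ (show tdeg p.1 < (n + 1) + m by omega),
        coeff_vlim hm hΦ (show tdeg p.2 < (n + 1) + m by omega)]
    have hv1 : coeff (R := ℂ) d (vlim Φ) = coeff (R := ℂ) d VN := coeff_vlim hm hΦ hlt
    have hdouble : VN + VN = Φ - V' ^ 2 := by
      show (2⁻¹ : ℂ) • (Φ - V' ^ 2) + (2⁻¹ : ℂ) • (Φ - V' ^ 2) = Φ - V' ^ 2
      rw [← two_smul ℂ, smul_smul]
      norm_num
    have hkey2 : VN * VN + (VN + VN) = Φ + (VN - V') * (VN + V') := by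
      rw [hdouble]; ring
    have hdiff : coeff (R := ℂ) d ((VN - V') * (VN + V')) = 0 := by
      have h2 := ordGE_mul (Vseq_diff_ord hm hΦ n) (ordGE_triv (VN + V'))
      exact h2 d (show tdeg d < n + m + 0 by omega)
    rw [map_add, map_add, hvv, hv1, ← map_add, ← map_add, hkey2, map_add, hdiff, add_zero]
  have : (1 + vlim Φ) ^ 2 = 1 + (vlim Φ * vlim Φ + (vlim Φ + vlim Φ)) := by ring
  rw [this, key]

end Sqrt

/-- `(1+v)^k - 1` keeps the order of `v`. -/
lemma one_add_pow_ord {v : S2} {m : ℕ} (hv : ordGE v m) (k : ℕ) :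
    ordGE ((1 + v) ^ k - 1) m := by
  induction k with
  | zero => simpa using ordGE_zero m
  | succ k ih =>
    have : (1 + v) ^ (k + 1) - 1 = ((1 + v) ^ k - 1) * (1 + v) + v := by ring
    rw [this]
    apply ordGE_add _ hv
    have := ordGE_mul ih (ordGE_triv (1 + v))
    simpa using this


open MvPowerSeries in
theorem main (α ℓ : ℕ) (hα : 2 ≤ α) (hℓ : α ≤ ℓ)
    (F G Ψ : S2)
    (hF : ordGE (F - X 0) (ℓ + 1))
    (hG : ordGE (G - X 1) (ℓ + 1))
    (hΨ : ordGE Ψ ℓ)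
    (hGform : G = X 1 * (1 + Ψ)) :
    ∃! p : S2 × S2,
      ordGE (p.1 - X 0) (ℓ + 1) ∧ ordGE (p.2 - X 1) (ℓ + 1) ∧
      p.2 ^ 2 = pscomp G ![X 0 * X 1 ^ α, X 1 ^ 2] ∧
      p.1 * p.2 ^ α = pscomp F ![X 0 * X 1 ^ α, X 1 ^ 2] := by
  classical
  set B : Fin 2 → S2 := ![X 0 * X 1 ^ α, X 1 ^ 2] with hBdef
  have hB0 : B 0 = X 0 * X 1 ^ α := rfl
  have hB1 : B 1 = X 1 ^ 2 := rfl
  have hB2 : ∀ i, ordGE (B i) 2 := by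
    intro i
    fin_cases i
    · show ordGE (B 0) 2
      rw [hB0]
      exact ordGE_mono (by omega) (ordGE_mul (ordGE_X 0) (ordGE_pow (ordGE_X 1) α))
    · show ordGE (B 1) 2
      rw [hB1]
      exact ordGE_mono (by omega) (ordGE_pow (ordGE_X 1) 2)
  have hB1s : ∀ i, ordGE (B i) 1 := fun i => ordGE_mono (by omega) (hB2 i)
  have hBw0 : wOrdGE (B 0) α := by
    rw [hB0]
    have := wOrdGE_mul (wOrdGE_triv (X 0 : S2)) (wOrdGE_pow wOrdGE_X1 α)
    rwa [show 0 + α * 1 = α by ring] at this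
  have hBw1 : wOrdGE (B 1) 2 := by
    rw [hB1]
    have := wOrdGE_pow wOrdGE_X1 2
    rwa [show 2 * 1 = 2 by ring] at this
  -- the composed perturbation
  set Φ : S2 := pscomp Ψ B with hΦdef
  have hΦ : ordGE Φ (2 * ℓ) := pscomp_ordGE hB2 hΨ
  have hm : 1 ≤ 2 * ℓ := by omega
  set v : S2 := vlim Φ with hvdef
  have hv : ordGE v (2 * ℓ) := vlim_ord hm hΦ
  have hsq : (1 + v) ^ 2 = 1 + Φ := vlim_sq hm hΦ
  -- the lifted second component
  have hGhat_sub : ordGE (X 1 * (1 + v) - X 1) (ℓ + 1) := by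
    have he : X 1 * (1 + v) - X 1 = X 1 * v := by ring
    rw [he]
    exact ordGE_mono (by omega) (ordGE_mul (ordGE_X 1) hv)
  have hGhat_sq : (X 1 * (1 + v)) ^ 2 = pscomp G B := by
    rw [hGform, pscomp_mul hB1s, pscomp_X, pscomp_add, pscomp_one, hB1, mul_pow, hsq]
  -- the composed first perturbation and division by w^α
  set E : S2 := pscomp (F - X 0) B with hEdef
  have hEord : ordGE E (2 * (ℓ + 1)) := pscomp_ordGE hB2 hF
  have hEw : wOrdGE E α := by
    intro d hd
    rw [hEdef, coeff_pscomp]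
    apply aeval_wOrd hBw0 hBw1 _ _ d hd
    intro e he
    have h1 : ℓ + 1 ≤ tdeg e := by
      by_contra hcon
      push_neg at hcon
      apply he
      rw [MvPowerSeries.coeff_trunc]
      split_ifs with hcc
      · exact hF e hcon
      · rfl
    have h2 : tdeg e = e 0 + e 1 := tdeg_eq e
    by_cases h0 : e 0 = 0
    · have : ℓ + 1 ≤ e 1 := by omega
      omega
    · have h3 : 1 ≤ e 0 := Nat.one_le_iff_ne_zero.mpr h0
      have : α * 1 ≤ α * e 0 := Nat.mul_le_mul_left α h3
      omega
  obtain ⟨E', hE'eq, hE'f⟩ := X1pow_div hEw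
  have hE'ord : ordGE E' (ℓ + 1) := by
    apply ordGE_mono (show ℓ + 1 ≤ 2 * ℓ + 2 - α by omega)
    apply hE'f
    exact ordGE_mono (show 2 * ℓ + 2 - α + α ≤ 2 * (ℓ + 1) by omega) hEord
  have hFB : pscomp F B = X 1 ^ α * (X 0 + E') := by
    calc pscomp F B = pscomp (X 0 + (F - X 0)) B := by rw [add_sub_cancel]
      _ = B 0 + E := by rw [pscomp_add, pscomp_X, hEdef]
      _ = X 0 * X 1 ^ α + X 1 ^ α * E' := by rw [hB0, hE'eq]
      _ = X 1 ^ α * (X 0 + E') := by ring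
  -- the unit (1+v)^α and its inverse
  set U : S2 := (1 + v) ^ α with hUdef
  have hU1 : ordGE (U - 1) (2 * ℓ) := one_add_pow_ord hv α
  have hv0 : constantCoeff v = 0 := by
    rw [← coeff_zero_eq_constantCoeff_apply]
    exact hv 0 (by simp [show ((0 : Fin 2 →₀ ℕ).sum fun _ n => n) = 0 from rfl]; omega)
  have hUconst : constantCoeff U = 1 := by
    rw [hUdef, map_pow, map_add, map_one, hv0, add_zero, one_pow]
  set W : S2 := invOfUnit U 1 with hWdef
  have hUW : U * W = 1 := mul_invOfUnit U 1 (by rw [hUconst, Units.val_one])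
  have hW1 : ordGE (W - 1) (2 * ℓ) := by
    have he : W - 1 = -(U - 1) * W := by linear_combination hUW
    rw [he]
    have := ordGE_mul (ordGE_neg hU1) (ordGE_triv W)
    rwa [Nat.add_zero] at this
  -- the lifted first component
  have hFhat_sub : ordGE ((X 0 + E') * W - X 0) (ℓ + 1) := by
    have he : (X 0 + E') * W - X 0 = X 0 * (W - 1) + E' * W := by ring
    rw [he]
    apply ordGE_add
    · exact ordGE_mono (by omega) (ordGE_mul (ordGE_X 0) hW1)
    · have := ordGE_mul hE'ord (ordGE_triv W)
      rwa [Nat.add_zero] at this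
  have hFhat_id : (X 0 + E') * W * (X 1 * (1 + v)) ^ α = pscomp F B := by
    rw [hFB, mul_pow, ← hUdef]
    calc (X 0 + E') * W * (X 1 ^ α * U) = X 1 ^ α * (X 0 + E') * (U * W) := by ring
      _ = X 1 ^ α * (X 0 + E') := by rw [hUW, mul_one]
  -- assemble
  refine ⟨((X 0 + E') * W, X 1 * (1 + v)), ⟨hFhat_sub, hGhat_sub, hGhat_sq, hFhat_id⟩, ?_⟩
  rintro ⟨F1, G1⟩ ⟨u1, u2, u3, u4⟩
  simp only at u1 u2 u3 u4
  have hcoeff : ∀ Gh : S2, ordGE (Gh - X 1) (ℓ + 1) →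
      coeff (R := ℂ) (Finsupp.single 1 1) Gh = 1 := by
    intro Gh h
    have h2 := h (Finsupp.single 1 1)
      (by show tdeg (Finsupp.single (1 : Fin 2) 1) < ℓ + 1; rw [tdeg_single1]; omega)
    rw [map_sub, sub_eq_zero] at h2
    rw [h2, MvPowerSeries.coeff_X, if_pos rfl]
  have hGG : G1 ^ 2 = (X 1 * (1 + v)) ^ 2 := by rw [u3, ← hGhat_sq]
  have hGne : G1 + X 1 * (1 + v) ≠ 0 := by
    intro h0
    have hc := congrArg (coeff (R := ℂ) (Finsupp.single 1 1)) h0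
    rw [map_add, hcoeff G1 u2, hcoeff _ hGhat_sub, map_zero] at hc
    norm_num at hc
  have hG1 : G1 = X 1 * (1 + v) := by
    have hfac : (G1 - X 1 * (1 + v)) * (G1 + X 1 * (1 + v)) = 0 := by linear_combination hGG
    rcases mul_eq_zero.mp hfac with h | h
    · exact sub_eq_zero.mp h
    · exact absurd h hGne
  have hGhat_ne : (X 1 * (1 + v) : S2) ≠ 0 := by
    intro h0
    have hc := congrArg (coeff (R := ℂ) (Finsupp.single 1 1)) h0
    rw [hcoeff _ hGhat_sub, map_zero] at hc
    norm_num at hc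
  have hF1 : F1 = (X 0 + E') * W := by
    rw [hG1] at u4
    have h5 : F1 * (X 1 * (1 + v)) ^ α = (X 0 + E') * W * (X 1 * (1 + v)) ^ α := by
      rw [u4, hFhat_id]
    have h6 : (F1 - (X 0 + E') * W) * (X 1 * (1 + v)) ^ α = 0 := by linear_combination h5
    rcases mul_eq_zero.mp h6 with h | h
    · exact sub_eq_zero.mp h
    · exact absurd h (pow_ne_zero _ hGhat_ne)
  exact Prod.ext hF1 hG1

end Stmt13Aux


/-- Lifting a formal map `(F,G)` through the blow-up `B(z,w) = (z w^α, w²)`,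
with control of jets (Proposition 5.2, case `n = 1`):  there exist unique
`F̂, Ĝ` agreeing with `(z,w)` to order `ℓ` such that `Ĝ² = G∘B` and
`F̂·Ĝ^α = F∘B`.  Here `Fin 2 = (z,w)`, `X 0 = z`, `X 1 = w`. -/
theorem stmt13 (α ℓ : ℕ) (hα : 2 ≤ α) (hℓ : α ≤ ℓ)
    (F G Ψ : MvPowerSeries (Fin 2) ℂ)
    (hF : ordGE (F - MvPowerSeries.X 0) (ℓ + 1))
    (hG : ordGE (G - MvPowerSeries.X 1) (ℓ + 1))
    (hΨ : ordGE Ψ ℓ)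
    (hGform : G = MvPowerSeries.X 1 * (1 + Ψ)) :
    ∃! p : MvPowerSeries (Fin 2) ℂ × MvPowerSeries (Fin 2) ℂ,
      ordGE (p.1 - MvPowerSeries.X 0) (ℓ + 1) ∧
      ordGE (p.2 - MvPowerSeries.X 1) (ℓ + 1) ∧
      p.2 ^ 2 = pscomp G ![MvPowerSeries.X 0 * MvPowerSeries.X 1 ^ α,
        MvPowerSeries.X 1 ^ 2] ∧
      p.1 * p.2 ^ α = pscomp F ![MvPowerSeries.X 0 * MvPowerSeries.X 1 ^ α,
        MvPowerSeries.X 1 ^ 2] :=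
  Stmt13Aux.main α ℓ hα hℓ F G Ψ hF hG hΨ hGform
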